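/- arXiv:2011.13595 — 2 statements merged into one kernel-verified Lean document; each statement's English description precedes it below -/
import Mathlib

section
/- Let χ be a locally finite subset of ℝ^d, and let (r^-(c))_{c∈χ} and (r^+(c))_{c∈χ} be two families of nonnegative real numbers with r^-(c) ≤ r^+(c) for all c ∈ χ; extend r^- and r^+ by 0 outside χ, and set ξ^- = {(c, r^-(c)) : c ∈ χ, r^-(c) > 0} and ξ^+ = {(c, r^+(c)) : c ∈ χ, r^+(c) > 0}. Then for every path π = (x_0,…,x_n): τ̃(π;ξ^-) ≤ τ̃(π;ξ^+) + 2 Σ_{i=1}^{n−1} (r^+(x_i) − r^-(x_i)). -/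
open MeasureTheory Set

noncomputable section

/-- Euclidean space `ℝ^d`. -/
abbrev Euc (d : ℕ) : Type := EuclideanSpace ℝ (Fin d)

/-- A configuration: a locally finite collection of open balls of `ℝ^d`, encoded by its
radius function `radius : ℝ^d → [0,∞)`, where `radius c > 0` iff `c` is the center of a
ball of the configuration (each center carries a unique radius, so a configuration is the
same as a locally finite subset of `ℝ^d × (0,∞)` whose first coordinates are distinct).
Local finiteness in `ℝ^d × (0,∞)`: every bounded region of `ℝ^d` contains finitely many
centers of radius at least `ε`, for every `ε > 0`. -/
structure Config (d : ℕ) where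
  radius : Euc d → ℝ
  radius_nonneg : ∀ c, 0 ≤ radius c
  locFin : ∀ s : Set (Euc d), Bornology.IsBounded s →
    ∀ ε : ℝ, 0 < ε → {c | c ∈ s ∧ ε ≤ radius c}.Finite

namespace Config

/-- `Σ(ξ)`: the union of the open balls of the configuration. -/
def sigma {d : ℕ} (ξ : Config d) : Set (Euc d) :=
  ⋃ c, Metric.ball c (ξ.radius c)

/-- The restriction of a configuration to a subset `S` of its centers. -/
def restrict {d : ℕ} (ξ : Config d) (S : Set (Euc d)) : Config d where
  radius := S.indicator ξ.radius
  radius_nonneg c := Set.indicator_nonneg (fun a _ => ξ.radius_nonneg a) c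
  locFin s hs ε hε := by
    refine (ξ.locFin s hs ε hε).subset ?_
    rintro c ⟨h1, h2⟩
    refine ⟨h1, ?_⟩
    by_cases h : c ∈ S
    · rwa [Set.indicator_of_mem h] at h2
    · rw [Set.indicator_of_notMem h] at h2; linarith

/-- The configuration keeping only the balls of radius `> θ`. -/
def threshold {d : ℕ} (ξ : Config d) (θ : ℝ) : Config d where
  radius c := if θ < ξ.radius c then ξ.radius c else 0
  radius_nonneg c := by
    try dsimp only
    split
    · exact ξ.radius_nonneg c
    · exact le_rfl
  locFin s hs ε hε := by
    refine (ξ.locFin s hs ε hε).subset ?_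
    rintro c ⟨h1, h2⟩
    refine ⟨h1, ?_⟩
    try dsimp only at h2
    split_ifs at h2 with h
    · exact h2
    · linarith

end Config

variable {d : ℕ}

/-- `τ(x,y;ξ)`: the one-dimensional Lebesgue measure of `[x,y] ∖ Σ(ξ)`. -/
def segTau (ξ : Config d) (a b : Euc d) : ℝ :=
  ‖b - a‖ * (volume {t : ℝ | t ∈ Icc (0:ℝ) 1 ∧ a + t • (b - a) ∉ ξ.sigma}).toReal

/-- `ℓ(π)`: the Euclidean length of a finite sequence of points. -/
def pathLen (n : ℕ) (x : Fin (n+1) → Euc d) : ℝ :=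
  ∑ i : Fin n, dist (x i.castSucc) (x i.succ)

/-- `τ(π;ξ)`, the travel time of a path. -/
def pathTau (ξ : Config d) (n : ℕ) (x : Fin (n+1) → Euc d) : ℝ :=
  ∑ i : Fin n, segTau ξ (x i.castSucc) (x i.succ)

/-- The radius of the ball `Z_i^+(π;ξ)` removed at the left endpoint of segment `i`
(zero when the left endpoint is `x_0`, following `Z_0^+ = ∅`). -/
def leftR (ξ : Config d) {n : ℕ} (x : Fin (n+1) → Euc d) (i : Fin n) : ℝ :=
  if (i : ℕ) = 0 then 0 else ξ.radius (x i.castSucc)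

/-- The radius of the ball `Z_{i+1}^-(π;ξ)` removed at the right endpoint of segment `i`
(zero when the right endpoint is `x_n`, following `Z_n^- = ∅`). -/
def rightR (ξ : Config d) {n : ℕ} (x : Fin (n+1) → Euc d) (i : Fin n) : ℝ :=
  if (i : ℕ) + 1 = n then 0 else ξ.radius (x i.succ)

/-- The local travel time of the segment `[a,b]` with removed balls of radii `rl` at `a`
and `rr` at `b`: the length of `[a,b] ∖ (B(a,rl) ∪ B(b,rr))`. -/
def locSegTau (rl rr : ℝ) (a b : Euc d) : ℝ :=
  ‖b - a‖ * (volume {t : ℝ | t ∈ Icc (0:ℝ) 1 ∧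
    a + t • (b - a) ∉ Metric.ball a rl ∪ Metric.ball b rr}).toReal

/-- `τ̃(π;ξ)`, the local travel time of a finite sequence of points. -/
def pathLocTau (ξ : Config d) (n : ℕ) (x : Fin (n+1) → Euc d) : ℝ :=
  ∑ i : Fin n, locSegTau (leftR ξ x i) (rightR ξ x i) (x i.castSucc) (x i.succ)

/-- `π` is a `ξ`-good path: interior points are centers of `ξ`, and on each segment the
removed set `Z_{i-1}^+ ∪ Z_i^-` coincides with `Σ(ξ)`. -/
def IsGood (ξ : Config d) (n : ℕ) (x : Fin (n+1) → Euc d) : Prop :=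
  (∀ i : Fin (n+1), 0 < (i : ℕ) → (i : ℕ) < n → 0 < ξ.radius (x i)) ∧
  ∀ i : Fin n,
    segment ℝ (x i.castSucc) (x i.succ) ∩
      (Metric.ball (x i.castSucc) (leftR ξ x i) ∪ Metric.ball (x i.succ) (rightR ξ x i)) =
    segment ℝ (x i.castSucc) (x i.succ) ∩ ξ.sigma

/-- `T(A,B;ξ)`: the infimum of travel times over paths (sequences of distinct points)
from `A` to `B`; `T(a,b;ξ)` is the special case `A = {a}`, `B = {b}`. -/
def Ttime (ξ : Config d) (A B : Set (Euc d)) : ℝ :=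
  sInf {v : ℝ | ∃ (n : ℕ) (x : Fin (n+1) → Euc d), Function.Injective x ∧
    x 0 ∈ A ∧ x (Fin.last n) ∈ B ∧ v = pathTau ξ n x}

/-- `T^□(a_0,…,a_k;ξ)`: infimum over pairwise disjoint finite subsets `ξ^1,…,ξ^k` of `ξ`
(given by disjoint finite sets of centers) of `Σ_j T(a_{j-1},a_j;ξ^j)`. -/
def TSq (ξ : Config d) (k : ℕ) (a : ℕ → Euc d) : ℝ :=
  sInf {v : ℝ | ∃ S : ℕ → Set (Euc d),
    (∀ j, (S j).Finite) ∧
    (∀ j, ∀ c ∈ S j, 0 < ξ.radius c) ∧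
    (∀ i j, i < k → j < k → i ≠ j → Disjoint (S i) (S j)) ∧
    v = ∑ j ∈ Finset.range k, Ttime (ξ.restrict (S j)) {a j} {a (j+1)}}

/-- The greedy functional `G(s;ξ)`: the supremum of `r(π;ξ)/ℓ(π)` over paths starting at
`0`, with at least two points, and at least one point outside the open ball `B(0,s)`. -/
def greedyG (ξ : Config d) (s : ℝ) : ℝ :=
  sSup {g : ℝ | ∃ (n : ℕ) (x : Fin (n+1) → Euc d), Function.Injective x ∧ 1 ≤ n ∧
    x 0 = 0 ∧ (∃ i : Fin (n+1), s ≤ ‖x i‖) ∧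
    g = (∑ i : Fin (n+1), ξ.radius (x i)) / pathLen n x}

/-- The vertices of a path, clamped: `clampPt n x j = x_{min(j,n)}`. -/
def clampPt (n : ℕ) (x : Fin (n+1) → Euc d) (j : ℕ) : Euc d :=
  x ⟨min j n, Nat.lt_succ_of_le (min_le_right j n)⟩

/-- Cumulative length of the first `j` segments of the path. -/
def cumLen (n : ℕ) (x : Fin (n+1) → Euc d) (j : ℕ) : ℝ :=
  ∑ i ∈ Finset.range j, dist (clampPt n x i) (clampPt n x (i+1))

/-- Index of the segment containing the arc-length parameter `t`. -/
def segIdx (n : ℕ) (x : Fin (n+1) → Euc d) (t : ℝ) : ℕ :=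
  sSup {j : ℕ | j ≤ n ∧ cumLen n x j ≤ t}

/-- The arc-length parametrization `[0,ℓ(π)] → ℝ^d` of the path. -/
def pathParam (n : ℕ) (x : Fin (n+1) → Euc d) (t : ℝ) : Euc d :=
  clampPt n x (segIdx n x t) +
    ((t - cumLen n x (segIdx n x t)) /
        dist (clampPt n x (segIdx n x t)) (clampPt n x (segIdx n x t + 1))) •
      (clampPt n x (segIdx n x t + 1) - clampPt n x (segIdx n x t))

/-- `(a_0,…,a_k)`, together with the times `(t_0,…,t_k)`, is the `ρ`-skeleton of the path
`π` (viewed as an arc-length parametrized curve): `t_0 = 0`, `a_i = π(t_i)`, each `t_{i+1}`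
is the first time after `t_i` at which the curve meets the sphere `S(a_i,ρ)`, and after
time `t_k` the curve stays inside the open ball `B(a_k,ρ)`. -/
structure IsSkeleton (n : ℕ) (x : Fin (n+1) → Euc d) (ρ : ℝ) (k : ℕ)
    (a : ℕ → Euc d) (t : ℕ → ℝ) : Prop where
  t_zero : t 0 = 0
  a_eq : ∀ i ≤ k, a i = pathParam n x (t i)
  t_mono : ∀ i < k, t i < t (i + 1)
  t_mem : ∀ i ≤ k, 0 ≤ t i ∧ t i ≤ pathLen n x
  stays : ∀ i < k, ∀ s, t i ≤ s → s < t (i + 1) → pathParam n x s ∈ Metric.ball (a i) ρ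
  exits : ∀ i < k, dist (pathParam n x (t (i + 1))) (a i) = ρ
  final : ∀ s, t k ≤ s → s ≤ pathLen n x → pathParam n x s ∈ Metric.ball (a k) ρ

lemma seg_key {d : ℕ} (a b : Euc d) {rl rr rl' rr' : ℝ} (hl0 : 0 ≤ rl) (hr0 : 0 ≤ rr)
    (hl : rl ≤ rl') (hr : rr ≤ rr') :
    locSegTau rl rr a b ≤ locSegTau rl' rr' a b + ((rl' - rl) + (rr' - rr)) := by
  set L := ‖b - a‖ with hLdef
  have hL0 : 0 ≤ L := norm_nonneg _
  rcases eq_or_lt_of_le hL0 with h0 | hpos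
  · unfold locSegTau
    rw [← hLdef, ← h0]
    simp
    linarith
  have mem_char : ∀ r1 r2 t : ℝ, 0 ≤ t → t ≤ 1 →
      (a + t • (b - a) ∉ Metric.ball a r1 ∪ Metric.ball b r2 ↔
        r1 ≤ t * L ∧ r2 ≤ (1 - t) * L) := by
    intro r1 r2 t ht0 ht1
    have e1 : dist (a + t • (b - a)) a = t * L := by
      rw [dist_eq_norm]
      have : a + t • (b - a) - a = t • (b - a) := by abel
      rw [this, norm_smul, Real.norm_eq_abs, abs_of_nonneg ht0]
    have e2 : dist (a + t • (b - a)) b = (1 - t) * L := by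
      rw [dist_eq_norm]
      have : a + t • (b - a) - b = (t - 1) • (b - a) := by
        rw [sub_smul, one_smul]; abel
      rw [this, norm_smul, Real.norm_eq_abs, abs_of_nonpos (by linarith), neg_sub]
    simp only [Set.mem_union, Metric.mem_ball, e1, e2, not_or, not_lt]
  set S : Set ℝ := {t : ℝ | t ∈ Icc (0:ℝ) 1 ∧
      a + t • (b - a) ∉ Metric.ball a rl ∪ Metric.ball b rr} with hS
  set S' : Set ℝ := {t : ℝ | t ∈ Icc (0:ℝ) 1 ∧
      a + t • (b - a) ∉ Metric.ball a rl' ∪ Metric.ball b rr'} with hS'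
  have hsub : S ⊆ S' ∪ (Set.Ico (rl/L) (rl'/L) ∪ Set.Ioc (1-rr'/L) (1-rr/L)) := by
    rintro t ⟨⟨ht0, ht1⟩, hnot⟩
    rw [mem_char rl rr t ht0 ht1] at hnot
    obtain ⟨h1, h2⟩ := hnot
    by_cases hA : t * L < rl'
    · right; left
      exact ⟨(div_le_iff₀ hpos).mpr h1, (lt_div_iff₀ hpos).mpr hA⟩
    · by_cases hB : (1 - t) * L < rr'
      · right; right
        constructor
        · have : (1 - t) < rr' / L := (lt_div_iff₀ hpos).mpr hB
          linarith
        · have : rr / L ≤ 1 - t := (div_le_iff₀ hpos).mpr h2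
          linarith
      · left
        exact ⟨⟨ht0, ht1⟩, (mem_char rl' rr' t ht0 ht1).mpr ⟨not_lt.1 hA, not_lt.1 hB⟩⟩
  have hfin' : volume S' ≠ ⊤ := by
    have : S' ⊆ Icc (0:ℝ) 1 := fun t ht => ht.1
    exact ((measure_mono this).trans_lt (by simp)).ne
  have key : volume S ≤ volume S' + (ENNReal.ofReal ((rl' - rl)/L)
      + ENNReal.ofReal ((rr' - rr)/L)) := by
    refine (measure_mono hsub).trans ?_
    refine (measure_union_le _ _).trans ?_
    gcongr
    refine (measure_union_le _ _).trans ?_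
    rw [Real.volume_Ico, Real.volume_Ioc]
    have e3 : rl'/L - rl/L = (rl' - rl)/L := by ring
    have e4 : (1 - rr/L) - (1 - rr'/L) = (rr' - rr)/L := by ring
    rw [e3, e4]
  have hdiv1 : 0 ≤ (rl' - rl)/L := div_nonneg (by linarith) hL0
  have hdiv2 : 0 ≤ (rr' - rr)/L := div_nonneg (by linarith) hL0
  have htr : (volume S).toReal ≤ (volume S').toReal + ((rl' - rl)/L + (rr' - rr)/L) := by
    have hfinR : volume S' + (ENNReal.ofReal ((rl' - rl)/L)
        + ENNReal.ofReal ((rr' - rr)/L)) ≠ ⊤ := by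
      simp [hfin', ENNReal.add_ne_top, ENNReal.ofReal_ne_top]
    have := ENNReal.toReal_mono hfinR key
    rwa [ENNReal.toReal_add hfin' (by simp [ENNReal.add_ne_top]),
      ENNReal.toReal_add ENNReal.ofReal_ne_top ENNReal.ofReal_ne_top,
      ENNReal.toReal_ofReal hdiv1, ENNReal.toReal_ofReal hdiv2] at this
  show L * (volume S).toReal ≤ L * (volume S').toReal + ((rl' - rl) + (rr' - rr))
  have := mul_le_mul_of_nonneg_left htr hL0
  rw [mul_add, mul_add, mul_div_cancel₀ _ hpos.ne', mul_div_cancel₀ _ hpos.ne'] at this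
  linarith

lemma sum_claim_left {n : ℕ} (g : Fin (n+1) → ℝ) :
    (∑ i : Fin n, if (i : ℕ) = 0 then 0 else g i.castSucc) =
      ∑ j ∈ Finset.univ.filter (fun j : Fin (n+1) => 0 < (j : ℕ) ∧ (j : ℕ) < n), g j := by
  set F : ℕ → ℝ := fun m => if h : m < n + 1 then
    (if 0 < m ∧ m < n then g ⟨m, h⟩ else 0) else 0 with hF
  have hRHS : (∑ j ∈ Finset.univ.filter
      (fun j : Fin (n+1) => 0 < (j : ℕ) ∧ (j : ℕ) < n), g j) = ∑ m ∈ Finset.range (n+1), F m := by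
    rw [← Fin.sum_univ_eq_sum_range F (n+1), Finset.sum_filter]
    refine Finset.sum_congr rfl fun j _ => ?_
    simp only [hF, j.isLt, dif_pos, Fin.eta]
  have hLHS : (∑ i : Fin n, if (i : ℕ) = 0 then 0 else g i.castSucc)
      = ∑ m ∈ Finset.range n, F m := by
    rw [← Fin.sum_univ_eq_sum_range F n]
    refine Finset.sum_congr rfl fun i _ => ?_
    have hi : (i : ℕ) < n + 1 := Nat.lt_succ_of_lt i.isLt
    simp only [hF, hi, dif_pos, i.isLt, and_true]
    by_cases h : (i : ℕ) = 0
    · simp [h]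
    · rw [if_neg h, if_pos (Nat.pos_of_ne_zero h)]
      congr 1
  rw [hLHS, hRHS, Finset.sum_range_succ]
  have : F n = 0 := by simp [hF]
  rw [this, add_zero]

lemma sum_claim_right {n : ℕ} (g : Fin (n+1) → ℝ) :
    (∑ i : Fin n, if (i : ℕ) + 1 = n then 0 else g i.succ) =
      ∑ j ∈ Finset.univ.filter (fun j : Fin (n+1) => 0 < (j : ℕ) ∧ (j : ℕ) < n), g j := by
  set F : ℕ → ℝ := fun m => if h : m < n + 1 then
    (if 0 < m ∧ m < n then g ⟨m, h⟩ else 0) else 0 with hF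
  have hRHS : (∑ j ∈ Finset.univ.filter
      (fun j : Fin (n+1) => 0 < (j : ℕ) ∧ (j : ℕ) < n), g j) = ∑ m ∈ Finset.range (n+1), F m := by
    rw [← Fin.sum_univ_eq_sum_range F (n+1), Finset.sum_filter]
    refine Finset.sum_congr rfl fun j _ => ?_
    simp only [hF, j.isLt, dif_pos, Fin.eta]
  have hLHS : (∑ i : Fin n, if (i : ℕ) + 1 = n then 0 else g i.succ)
      = ∑ m ∈ Finset.range n, F (m + 1) := by
    rw [← Fin.sum_univ_eq_sum_range (fun m => F (m + 1)) n]
    refine Finset.sum_congr rfl fun i _ => ?_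
    have hi : (i : ℕ) + 1 < n + 1 := Nat.succ_lt_succ i.isLt
    simp only [hF, hi, dif_pos, Nat.succ_pos, true_and]
    by_cases h : (i : ℕ) + 1 = n
    · simp [h]
    · have hlt : (i : ℕ) + 1 < n := lt_of_le_of_ne (Nat.succ_le_of_lt i.isLt) h
      rw [if_neg h, if_pos hlt]
      congr 1
  rw [hLHS, hRHS, Finset.sum_range_succ' F]
  have : F 0 = 0 := by simp [hF]
  rw [this, add_zero]

/-- Let χ be a locally finite subset of ℝ^d and (r^-(c)), (r^+(c)) two
families of nonnegative radii with r^- ≤ r^+, extended by 0 outside χ (encoded here by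
two configurations with pointwise comparable radius functions). Then for every path
π = (x_0,…,x_n): τ̃(π;ξ^-) ≤ τ̃(π;ξ^+) + 2 Σ_{i=1}^{n−1} (r^+(x_i) − r^-(x_i)). -/
theorem stmt5 {d : ℕ} (hd : 2 ≤ d) (ξm ξp : Config d)
    (hle : ∀ c, ξm.radius c ≤ ξp.radius c)
    (n : ℕ) (x : Fin (n+1) → Euc d) (hinj : Function.Injective x) :
    pathLocTau ξm n x ≤ pathLocTau ξp n x +
      2 * ∑ i ∈ Finset.univ.filter (fun i : Fin (n+1) => 0 < (i : ℕ) ∧ (i : ℕ) < n),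
        (ξp.radius (x i) - ξm.radius (x i)) := by
  have key : ∀ i : Fin n,
      locSegTau (leftR ξm x i) (rightR ξm x i) (x i.castSucc) (x i.succ) ≤
      locSegTau (leftR ξp x i) (rightR ξp x i) (x i.castSucc) (x i.succ) +
      ((leftR ξp x i - leftR ξm x i) + (rightR ξp x i - rightR ξm x i)) := by
    intro i
    refine seg_key _ _ ?_ ?_ ?_ ?_
    · unfold leftR; split_ifs; exacts [le_rfl, ξm.radius_nonneg _]
    · unfold rightR; split_ifs; exacts [le_rfl, ξm.radius_nonneg _]
    · unfold leftR; split_ifs; exacts [le_rfl, hle _]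
    · unfold rightR; split_ifs; exacts [le_rfl, hle _]
  have h1 : pathLocTau ξm n x ≤ pathLocTau ξp n x +
      ∑ i : Fin n, ((leftR ξp x i - leftR ξm x i) + (rightR ξp x i - rightR ξm x i)) := by
    unfold pathLocTau
    rw [← Finset.sum_add_distrib]
    exact Finset.sum_le_sum fun i _ => key i
  set g : Fin (n+1) → ℝ := fun j => ξp.radius (x j) - ξm.radius (x j) with hg
  have h2 : ∑ i : Fin n, ((leftR ξp x i - leftR ξm x i) + (rightR ξp x i - rightR ξm x i))
      = 2 * ∑ j ∈ Finset.univ.filter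
        (fun j : Fin (n+1) => 0 < (j : ℕ) ∧ (j : ℕ) < n), g j := by
    rw [Finset.sum_add_distrib]
    have e1 : ∀ i : Fin n, leftR ξp x i - leftR ξm x i
        = if (i : ℕ) = 0 then 0 else g i.castSucc := by
      intro i; unfold leftR; split_ifs <;> simp [hg]
    have e2 : ∀ i : Fin n, rightR ξp x i - rightR ξm x i
        = if (i : ℕ) + 1 = n then 0 else g i.succ := by
      intro i; unfold rightR; split_ifs <;> simp [hg]
    rw [Finset.sum_congr rfl fun i _ => e1 i, Finset.sum_congr rfl fun i _ => e2 i,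
      sum_claim_left g, sum_claim_right g]
    ring
  rw [h2] at h1
  exact h1

end
end

section
/- Let χ be a locally finite subset of ℝ^d and let π = (x_0,…,x_n) be a path such that x_0 = 0 and every interior point x_1,…,x_{n−1} belongs to χ (a χ-regular path from 0). Let (a_0,…,a_k) be the 1-skeleton of π and assume k ≥ 1. Then ℓ(π) ≤ 2k + 2 + 2·card(χ ∩ ⋃_{j=0}^k B(a_j,1)). -/
open MeasureTheory Set

noncomputable section

variable {d : ℕ}

section Aux17

variable {d : ℕ}

lemma clampPt_eq (n : ℕ) (x : Fin (n+1) → Euc d) {j : ℕ} (hj : j ≤ n) :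
    clampPt n x j = x ⟨j, Nat.lt_succ_of_le hj⟩ := by
  unfold clampPt
  simp [min_eq_left hj]

lemma cumLen_succ (n : ℕ) (x : Fin (n+1) → Euc d) (j : ℕ) :
    cumLen n x (j+1) = cumLen n x j + dist (clampPt n x j) (clampPt n x (j+1)) :=
  Finset.sum_range_succ _ _

lemma cumLen_mono (n : ℕ) (x : Fin (n+1) → Euc d) : Monotone (cumLen n x) := by
  intro i j hij
  exact Finset.sum_le_sum_of_subset_of_nonneg (Finset.range_subset_range.mpr hij)
    (fun _ _ _ => dist_nonneg)

lemma cumLen_nonneg (n : ℕ) (x : Fin (n+1) → Euc d) (j : ℕ) : 0 ≤ cumLen n x j :=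
  Finset.sum_nonneg fun _ _ => dist_nonneg

lemma cumLen_step_pos {n : ℕ} {x : Fin (n+1) → Euc d} (hinj : Function.Injective x)
    {i : ℕ} (hi : i < n) : cumLen n x i < cumLen n x (i+1) := by
  rw [cumLen_succ, clampPt_eq n x (le_of_lt hi), clampPt_eq n x hi]
  have hne : x ⟨i, Nat.lt_succ_of_le hi.le⟩ ≠ x ⟨i+1, Nat.lt_succ_of_le hi⟩ := by
    intro h
    have := hinj h
    simp [Fin.ext_iff] at this
  have := dist_pos.mpr hne
  linarith

lemma cumLen_last (n : ℕ) (x : Fin (n+1) → Euc d) : cumLen n x n = pathLen n x := by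
  unfold cumLen pathLen
  rw [← Fin.sum_univ_eq_sum_range (fun i => dist (clampPt n x i) (clampPt n x (i+1)))]
  refine Finset.sum_congr rfl fun i _ => ?_
  rw [clampPt_eq n x (le_of_lt i.isLt), clampPt_eq n x i.isLt]
  congr 1

lemma segIdx_eq {n : ℕ} (x : Fin (n+1) → Euc d) {i : ℕ} {s : ℝ} (hi : i ≤ n)
    (h1 : cumLen n x i ≤ s) (h2 : i = n ∨ s < cumLen n x (i+1)) :
    segIdx n x s = i := by
  have hbdd : BddAbove {j | j ≤ n ∧ cumLen n x j ≤ s} := ⟨n, fun j hj => hj.1⟩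
  refine le_antisymm (csSup_le ⟨i, hi, h1⟩ ?_) (le_csSup hbdd ⟨hi, h1⟩)
  rintro j ⟨hj1, hj2⟩
  by_contra hji
  push_neg at hji
  rcases h2 with rfl | h2
  · exact absurd hj1 (not_le.mpr hji)
  · have := cumLen_mono n x (Nat.succ_le_of_lt hji)
    linarith

lemma pathParam_vertex {n : ℕ} {x : Fin (n+1) → Euc d} (hinj : Function.Injective x)
    {m : ℕ} (hm : m ≤ n) :
    pathParam n x (cumLen n x m) = x ⟨m, Nat.lt_succ_of_le hm⟩ := by
  have hseg : segIdx n x (cumLen n x m) = m := by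
    refine segIdx_eq x hm le_rfl ?_
    rcases eq_or_lt_of_le hm with rfl | hm'
    · exact Or.inl rfl
    · exact Or.inr (cumLen_step_pos hinj hm')
  unfold pathParam
  rw [hseg]
  rw [sub_self, zero_div, zero_smul, add_zero, clampPt_eq n x hm]

lemma pathParam_seg {n : ℕ} {x : Fin (n+1) → Euc d} (hinj : Function.Injective x)
    {i : ℕ} (hi : i < n) {s : ℝ}
    (h1 : cumLen n x i ≤ s) (h2 : s ≤ cumLen n x (i+1)) :
    pathParam n x s = x ⟨i, Nat.lt_succ_of_le hi.le⟩ +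
      ((s - cumLen n x i) / dist (x ⟨i, Nat.lt_succ_of_le hi.le⟩) (x ⟨i+1, Nat.lt_succ_of_le hi⟩)) •
        (x ⟨i+1, Nat.lt_succ_of_le hi⟩ - x ⟨i, Nat.lt_succ_of_le hi.le⟩) := by
  set xi := x ⟨i, Nat.lt_succ_of_le hi.le⟩
  set xi1 := x ⟨i+1, Nat.lt_succ_of_le hi⟩
  have hD : 0 < dist xi xi1 := by
    refine dist_pos.mpr ?_
    intro h
    have := hinj h
    simp [Fin.ext_iff] at this
  rcases eq_or_lt_of_le h2 with rfl | h2'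
  · rw [pathParam_vertex hinj hi]
    rw [cumLen_succ, add_sub_cancel_left]
    rw [clampPt_eq n x hi.le, clampPt_eq n x hi]
    rw [div_self (ne_of_gt hD), one_smul]
    abel
  · have hseg : segIdx n x s = i := segIdx_eq x hi.le h1 (Or.inr h2')
    unfold pathParam
    rw [hseg, clampPt_eq n x hi.le, clampPt_eq n x hi]

lemma pathParam_dist {n : ℕ} {x : Fin (n+1) → Euc d} (hinj : Function.Injective x)
    {i : ℕ} (hi : i < n) {s s' : ℝ}
    (h1 : cumLen n x i ≤ s) (hss : s ≤ s') (h2 : s' ≤ cumLen n x (i+1)) :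
    dist (pathParam n x s) (pathParam n x s') = s' - s := by
  set xi := x ⟨i, Nat.lt_succ_of_le hi.le⟩
  set xi1 := x ⟨i+1, Nat.lt_succ_of_le hi⟩
  have hD : 0 < dist xi xi1 := by
    refine dist_pos.mpr ?_
    intro h
    have := hinj h
    simp [xi, xi1, Fin.ext_iff] at this
  rw [pathParam_seg hinj hi h1 (le_trans hss h2),
    pathParam_seg hinj hi (le_trans h1 hss) h2]
  rw [dist_add_left (xi) _ _, dist_eq_norm, ← sub_smul, norm_smul]
  rw [div_sub_div_same, sub_sub_sub_cancel_right]
  have hnv : ‖xi1 - xi‖ = dist xi xi1 := by rw [dist_eq_norm, norm_sub_rev]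
  rw [Real.norm_eq_abs, abs_div, abs_sub_comm, abs_of_nonneg (by linarith : (0:ℝ) ≤ s' - s),
    abs_of_pos hD, hnv, div_mul_cancel₀ _ (ne_of_gt hD)]

lemma clamp_diff {a b u v : ℝ} (hab : a ≤ b) (huv : u ≤ v) :
    min b (max a v) - min b (max a u) = max 0 (min b v - max a u) := by
  rcases le_or_gt v a with h | h
  · have e1 : max a v = a := max_eq_left h
    have e2 : max a u = a := max_eq_left (huv.trans h)
    have e3 : min b v - max a u ≤ 0 := by
      have := min_le_right b v
      rw [e2]; linarith
    rw [max_eq_left e3, e1, e2, sub_self]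
  · have e1 : max a v = v := max_eq_right h.le
    rcases le_or_gt b u with hbu | hbu
    · have e2 : max a u = u := max_eq_right (hab.trans hbu)
      have e3 : min b v = b := min_eq_left (hbu.trans huv)
      have e4 : min b u = b := min_eq_left hbu
      have e5 : min b v - max a u ≤ 0 := by rw [e2, e3]; linarith
      rw [max_eq_left e5, e1, e2, e3, e4, sub_self]
    · have e2 : min b (max a u) = max a u := min_eq_right (max_le hab hbu.le)
      have e3 : max a u ≤ min b v := le_min (max_le hab hbu.le) (max_le h.le huv)
      rw [e1, e2, max_eq_right (by linarith : (0:ℝ) ≤ min b v - max a u)]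

lemma skeleton_closedBall {n k : ℕ} {x : Fin (n+1) → Euc d} {a : ℕ → Euc d} {t : ℕ → ℝ}
    (hsk : IsSkeleton n x 1 k a t) {j : ℕ} (hj : j < k) {s : ℝ}
    (h1 : t j ≤ s) (h2 : s ≤ t (j+1)) :
    pathParam n x s ∈ Metric.closedBall (a j) 1 := by
  rcases eq_or_lt_of_le h2 with rfl | h2'
  · exact Metric.mem_closedBall.mpr (le_of_eq (hsk.exits j hj))
  · exact Metric.ball_subset_closedBall (hsk.stays j hj s h1 h2')

lemma skeleton_cover {n k : ℕ} {x : Fin (n+1) → Euc d} {a : ℕ → Euc d} {t : ℕ → ℝ}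
    (hsk : IsSkeleton n x 1 k a t) {s : ℝ} (h0 : 0 ≤ s) (hl : s ≤ pathLen n x) :
    ∃ j ≤ k, pathParam n x s ∈ Metric.ball (a j) 1 := by
  by_cases hks : t k ≤ s
  · exact ⟨k, le_rfl, hsk.final s hks hl⟩
  push_neg at hks
  set S : Set ℕ := {j | j ≤ k ∧ t j ≤ s} with hS
  have hne : S.Nonempty := ⟨0, Nat.zero_le k, by rw [hsk.t_zero]; exact h0⟩
  have hbdd : BddAbove S := ⟨k, fun j hj => hj.1⟩
  set j := sSup S with hj
  have hjmem : j ∈ S := Nat.sSup_mem hne hbdd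
  have hjk : j < k := by
    rcases lt_or_eq_of_le hjmem.1 with h | h
    · exact h
    · exact absurd (h ▸ hjmem.2) (not_le.mpr hks)
  have hnext : s < t (j+1) := by
    by_contra h
    push_neg at h
    have : j + 1 ≤ j := le_csSup hbdd ⟨hjk, h⟩
    omega
  exact ⟨j, hjk.le, hsk.stays j hjk s hjmem.2 hnext⟩


end Aux17

/-- Let χ be locally finite, π a χ-regular path from 0, and (a_0,…,a_k) its
1-skeleton with k ≥ 1. Then ℓ(π) ≤ 2k + 2 + 2·card(χ ∩ ⋃_{j=0}^k B(a_j,1)). -/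
theorem stmt17 {d : ℕ} (hd : 2 ≤ d) (χ : Set (Euc d))
    (hχ : ∀ s : Set (Euc d), Bornology.IsBounded s → (χ ∩ s).Finite)
    (n : ℕ) (x : Fin (n+1) → Euc d) (hinj : Function.Injective x)
    (hx0 : x 0 = 0) (hreg : ∀ i : Fin (n+1), 0 < (i : ℕ) → (i : ℕ) < n → x i ∈ χ)
    (k : ℕ) (hk : 1 ≤ k) (a : ℕ → Euc d) (t : ℕ → ℝ)
    (hsk : IsSkeleton n x 1 k a t) :
    pathLen n x ≤ 2 * (k : ℝ) + 2 +
      2 * ((χ ∩ ⋃ j ∈ Finset.range (k+1), Metric.ball (a j) 1).ncard : ℝ) := by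
  classical
  set U : Set (Euc d) := ⋃ j ∈ Finset.range (k+1), Metric.ball (a j) 1 with hU
  have hUb : Bornology.IsBounded U := by
    refine (Bornology.isBounded_biUnion (Finset.finite_toSet _)).2 ?_
    intro j _
    exact Metric.isBounded_ball
  have hfin : (χ ∩ U).Finite := hχ U hUb
  have hcard0 : (0:ℝ) ≤ ((χ ∩ U).ncard : ℝ) := Nat.cast_nonneg _
  rcases Nat.eq_zero_or_pos n with rfl | hn
  · have : pathLen 0 x = 0 := by simp [pathLen]
    rw [this]
    have : (0:ℝ) ≤ (k:ℝ) := Nat.cast_nonneg _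
    linarith
  -- main case : n ≥ 1
  set L := pathLen n x with hLdef
  set c : ℕ → ℝ := cumLen n x with hc
  have hcL : c n = L := cumLen_last n x
  set T : ℕ → ℝ := fun j => if j ≤ k then t j else L with hT
  have hTmono : Monotone T := by
    refine monotone_nat_of_le_succ fun j => ?_
    by_cases hj : j + 1 ≤ k
    · rw [hT]; simp only
      rw [if_pos (by omega), if_pos hj]
      exact (hsk.t_mono j (by omega)).le
    · by_cases hj2 : j ≤ k
      · have hjk : j = k := by omega
        rw [hT]; simp only
        rw [if_pos hj2, if_neg hj, hjk]
        exact (hsk.t_mem k le_rfl).2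
      · rw [hT]; simp only
        rw [if_neg hj2, if_neg hj]
  have hT0 : T 0 = 0 := by
    rw [hT]; simp only
    rw [if_pos (Nat.zero_le k), hsk.t_zero]
  have hTlast : T (k+1) = L := by
    rw [hT]; simp only
    rw [if_neg (by omega)]
  have hTeq : ∀ j ≤ k, T j = t j := by
    intro j hj
    rw [hT]; simp only
    rw [if_pos hj]
  -- the overlap lengths
  set ov : ℕ → ℕ → ℝ := fun i j => max 0 (min (c (i+1)) (T (j+1)) - max (c i) (T j)) with hov
  have hov_sum : ∀ i < n, ∑ j ∈ Finset.range (k+1), ov i j = c (i+1) - c i := by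
    intro i hi
    have hab : c i ≤ c (i+1) := cumLen_mono n x (Nat.le_succ i)
    have hrw : ∀ j ∈ Finset.range (k+1), ov i j =
        (fun j => min (c (i+1)) (max (c i) (T j))) (j+1) -
        (fun j => min (c (i+1)) (max (c i) (T j))) j := by
      intro j _
      exact (clamp_diff hab (hTmono (Nat.le_succ j))).symm
    rw [Finset.sum_congr rfl hrw,
      Finset.sum_range_sub (fun j => min (c (i+1)) (max (c i) (T j))) (k+1)]
    simp only [hT0, hTlast]
    have h1 : max (c i) (0:ℝ) = c i := max_eq_left (cumLen_nonneg n x i)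
    have h3 : c (i+1) ≤ L := by rw [← hcL]; exact cumLen_mono n x hi
    have h4 : c i ≤ L := by rw [← hcL]; exact cumLen_mono n x hi.le
    rw [h1, min_eq_right hab, max_eq_right h4, min_eq_left h3]
  have hLsum : L = ∑ i ∈ Finset.range n, ∑ j ∈ Finset.range (k+1), ov i j := by
    rw [Finset.sum_congr rfl (fun i hi => hov_sum i (Finset.mem_range.mp hi)),
      Finset.sum_range_sub c n]
    have : c 0 = 0 := by simp [hc, cumLen]
    rw [this, hcL, sub_zero]
  -- geometric bound on each positive overlap
  have hov_le : ∀ i < n, ∀ j < k+1, 0 < ov i j → ov i j ≤ 2 := by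
    intro i hi j hj hpos
    set s : ℝ := max (c i) (T j) with hs
    set s' : ℝ := min (c (i+1)) (T (j+1)) with hs'
    have hss : s < s' := by
      by_contra h
      push_neg at h
      rw [hov] at hpos
      simp only at hpos
      rw [max_eq_left (by linarith)] at hpos
      exact lt_irrefl 0 hpos
    have hovval : ov i j = s' - s := by
      rw [hov]; simp only
      rw [max_eq_right (by linarith)]
    have hc1 : c i ≤ s := le_max_left _ _
    have hc2 : s' ≤ c (i+1) := min_le_left _ _
    have ht1 : T j ≤ s := le_max_right _ _
    have ht2 : s' ≤ T (j+1) := min_le_right _ _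
    have hdist : dist (pathParam n x s) (pathParam n x s') = s' - s :=
      pathParam_dist hinj hi hc1 hss.le hc2
    have hmem : ∀ σ, T j ≤ σ → σ ≤ T (j+1) → c i ≤ σ → σ ≤ c (i+1) →
        pathParam n x σ ∈ Metric.closedBall (a j) 1 := by
      intro σ hσ1 hσ2 hσ3 hσ4
      rcases lt_or_eq_of_le (Nat.lt_succ_iff.mp hj) with hjk | hjk
      · refine skeleton_closedBall hsk hjk ?_ ?_
        · rw [← hTeq j (by omega)]; exact hσ1
        · rw [← hTeq (j+1) (by omega)]; exact hσ2
      · subst hjk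
        refine Metric.ball_subset_closedBall (hsk.final σ ?_ ?_)
        · rw [← hTeq j le_rfl]; exact hσ1
        · exact le_trans hσ2 (le_of_eq hTlast)
    have hm1 := hmem s ht1 (le_trans hss.le ht2) hc1 (le_trans hss.le hc2)
    have hm2 := hmem s' (le_trans ht1 hss.le) ht2 (le_trans hc1 hss.le) hc2
    rw [Metric.mem_closedBall] at hm1 hm2
    have := dist_triangle (pathParam n x s) (a j) (pathParam n x s')
    rw [dist_comm (a j) _] at this
    rw [hovval]
    linarith [hdist ▸ this]
  -- counting positive overlaps
  set P := (Finset.range n ×ˢ Finset.range (k+1)).filter (fun p => 0 < ov p.1 p.2) with hP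
  have hsum_le : ∑ i ∈ Finset.range n, ∑ j ∈ Finset.range (k+1), ov i j ≤ 2 * P.card := by
    rw [← Finset.sum_product']
    have h1 : ∑ p ∈ Finset.range n ×ˢ Finset.range (k+1), ov p.1 p.2 = ∑ p ∈ P, ov p.1 p.2 := by
      refine (Finset.sum_subset (Finset.filter_subset _ _) ?_).symm
      intro p hmem hp
      have h2 : ¬ 0 < ov p.1 p.2 := fun h => hp (Finset.mem_filter.mpr ⟨hmem, h⟩)
      have h3 : (0:ℝ) ≤ ov p.1 p.2 := le_max_left _ _
      exact le_antisymm (not_lt.mp h2) h3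
    rw [h1]
    calc ∑ p ∈ P, ov p.1 p.2 ≤ ∑ _p ∈ P, (2:ℝ) := by
          refine Finset.sum_le_sum fun p hp => ?_
          rw [hP, Finset.mem_filter, Finset.mem_product, Finset.mem_range, Finset.mem_range] at hp
          exact hov_le p.1 hp.1.1 p.2 hp.1.2 hp.2
      _ = 2 * P.card := by rw [Finset.sum_const, nsmul_eq_mul, mul_comm]
  have hcardP : P.card ≤ n + k := by
    have hsub : ∀ p ∈ P, (if T p.2 ≤ c p.1 then p.1 else n + p.2 - 1) ∈ Finset.range (n + k) := by
      intro p hp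
      rw [hP, Finset.mem_filter, Finset.mem_product, Finset.mem_range, Finset.mem_range] at hp
      split_ifs with h
      · rw [Finset.mem_range]; omega
      · push_neg at h
        have hp2 : 1 ≤ p.2 := by
          by_contra h2
          push_neg at h2
          interval_cases h2' : p.2
          · rw [hT0] at h
            exact absurd (cumLen_nonneg n x p.1) (not_le.mpr h)
        rw [Finset.mem_range]; omega
    have hinjOn : Set.InjOn (fun p : ℕ × ℕ => if T p.2 ≤ c p.1 then p.1 else n + p.2 - 1) P := by
      intro p hp q hq heq
      simp only [Finset.coe_filter, Set.mem_setOf_eq, hP, Finset.mem_product,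
        Finset.mem_range] at hp hq
      obtain ⟨⟨hp1, hp2⟩, hppos⟩ := hp
      obtain ⟨⟨hq1, hq2⟩, hqpos⟩ := hq
      have hpkey : max (c p.1) (T p.2) < min (c (p.1+1)) (T (p.2+1)) := by
        by_contra h
        push_neg at h
        rw [hov] at hppos; simp only at hppos
        rw [max_eq_left (by linarith)] at hppos
        exact lt_irrefl 0 hppos
      have hqkey : max (c q.1) (T q.2) < min (c (q.1+1)) (T (q.2+1)) := by
        by_contra h
        push_neg at h
        rw [hov] at hqpos; simp only at hqpos
        rw [max_eq_left (by linarith)] at hqpos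
        exact lt_irrefl 0 hqpos
      have hp2' : 1 ≤ p.2 ∨ T p.2 ≤ c p.1 := by
        by_cases h : T p.2 ≤ c p.1
        · exact Or.inr h
        · push_neg at h
          left
          by_contra h2
          push_neg at h2
          interval_cases h2' : p.2
          · rw [hT0] at h
            exact absurd (cumLen_nonneg n x p.1) (not_le.mpr h)
      have hq2' : 1 ≤ q.2 ∨ T q.2 ≤ c q.1 := by
        by_cases h : T q.2 ≤ c q.1
        · exact Or.inr h
        · push_neg at h
          left
          by_contra h2
          push_neg at h2
          interval_cases h2' : q.2
          · rw [hT0] at h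
            exact absurd (cumLen_nonneg n x q.1) (not_le.mpr h)
      simp only at heq
      split_ifs at heq with h1 h2 h2
      · -- both left branch : p.1 = q.1, show p.2 = q.2
        have hi : p.1 = q.1 := heq
        refine Prod.ext hi ?_
        rcases lt_trichotomy p.2 q.2 with hlt | he | hlt
        · exfalso
          have e1 : T (p.2+1) ≤ T q.2 := hTmono (by omega)
          have e2 : c p.1 < T (p.2+1) := lt_of_le_of_lt (le_max_left _ _)
            (lt_of_lt_of_le hpkey (min_le_right _ _))
          rw [hi] at e2
          linarith
        · exact he
        · exfalso
          have e1 : T (q.2+1) ≤ T p.2 := hTmono (by omega)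
          have e2 : c q.1 < T (q.2+1) := lt_of_le_of_lt (le_max_left _ _)
            (lt_of_lt_of_le hqkey (min_le_right _ _))
          rw [← hi] at e2
          rw [← hi] at h2
          linarith
      · exfalso
        push_neg at h2
        have : 1 ≤ q.2 := hq2'.resolve_right (not_le.mpr h2)
        omega
      · exfalso
        push_neg at h1
        have : 1 ≤ p.2 := hp2'.resolve_right (not_le.mpr h1)
        omega
      · -- both right branch
        push_neg at h1 h2
        have hp2'' : 1 ≤ p.2 := hp2'.resolve_right (not_le.mpr h1)
        have hq2'' : 1 ≤ q.2 := hq2'.resolve_right (not_le.mpr h2)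
        have hj : p.2 = q.2 := by omega
        refine Prod.ext ?_ hj
        rcases lt_trichotomy p.1 q.1 with hlt | he | hlt
        · exfalso
          have e1 : c (p.1+1) ≤ c q.1 := cumLen_mono n x (by omega)
          have e2 : T p.2 < c (p.1+1) := lt_of_le_of_lt (le_max_right _ _)
            (lt_of_lt_of_le hpkey (min_le_left _ _))
          rw [hj] at e2
          linarith
        · exact he
        · exfalso
          have e1 : c (q.1+1) ≤ c p.1 := cumLen_mono n x (by omega)
          have e2 : T q.2 < c (q.1+1) := lt_of_le_of_lt (le_max_right _ _)
            (lt_of_lt_of_le hqkey (min_le_left _ _))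
          rw [← hj] at e2
          linarith
    have := Finset.card_le_card_of_injOn _ hsub hinjOn
    simpa using this
  -- length bound
  have hLle : L ≤ 2 * ((n : ℝ) + k) := by
    rw [hLsum]
    refine le_trans hsum_le ?_
    have : (P.card : ℝ) ≤ (n : ℝ) + k := by
      have := hcardP
      exact_mod_cast this
    linarith
  -- vertex count bound
  have hvert : (n : ℝ) - 1 ≤ ((χ ∩ U).ncard : ℝ) := by
    set e : Fin (n-1) → Euc d := fun i => x ⟨(i : ℕ)+1, by omega⟩ with he
    have he_inj : Function.Injective e := by
      intro i i' h
      have := hinj h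
      rw [Fin.ext_iff] at this ⊢
      simpa using this
    have hrange : Set.range e ⊆ χ ∩ U := by
      rintro _ ⟨i, rfl⟩
      have hi1 : (i : ℕ) + 1 < n + 1 := by omega
      constructor
      · refine hreg ⟨(i:ℕ)+1, hi1⟩ (by simp) ?_
        have := i.isLt
        simp only
        omega
      · have hpv : x ⟨(i:ℕ)+1, hi1⟩ = pathParam n x (c ((i:ℕ)+1)) :=
          (pathParam_vertex hinj (by omega)).symm
        have h0 : 0 ≤ c ((i:ℕ)+1) := cumLen_nonneg n x _
        have hl : c ((i:ℕ)+1) ≤ L := by rw [← hcL]; exact cumLen_mono n x (by omega)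
        obtain ⟨j, hjk, hball⟩ := skeleton_cover hsk h0 hl
        rw [hU]
        have hjmem : j ∈ Finset.range (k+1) := Finset.mem_range.mpr (by omega)
        refine Set.mem_biUnion hjmem ?_
        rw [he]; simp only
        rw [hpv]
        exact hball
    have h1 : (Set.range e).ncard = n - 1 := by
      rw [← Nat.card_coe_set_eq, Nat.card_range_of_injective he_inj,
        Nat.card_eq_fintype_card, Fintype.card_fin]
    have h2 : (Set.range e).ncard ≤ (χ ∩ U).ncard := Set.ncard_le_ncard hrange hfin
    rw [h1] at h2
    have : ((n - 1 : ℕ) : ℝ) ≤ ((χ ∩ U).ncard : ℝ) := by exact_mod_cast h2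
    have hn1 : ((n - 1 : ℕ) : ℝ) = (n : ℝ) - 1 := by
      have : 1 ≤ n := hn
      push_cast [Nat.cast_sub this]
      ring
    linarith [hn1 ▸ this]
  -- conclude
  have : L ≤ 2 * (k : ℝ) + 2 + 2 * ((χ ∩ U).ncard : ℝ) := by linarith
  exact this


end
end
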